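/- Uniqueness of the second compatible multiplicative Poisson structure for W₂: let F be a field of characteristic 0 and c : ℤ → F. Consider the equation (E): for all a, b, k ∈ ℤ, (δ_{a,1} − δ_{a,−1})·δ_{b,k}·c(k) − (δ_{b,1} − δ_{b,−1})·δ_{a,k}·c(k) + δ_{k,0}·( c(b)·(δ_{a,b+1} − δ_{a,b−1}) − c(a)·(δ_{b,a+1} − δ_{b,a−1}) ) = c(k−1)·(δ_{b,1}·δ_{a,k} − δ_{a,1}·δ_{b,k}) + c(k+1)·(δ_{a,−1}·δ_{b,k} − δ_{b,−1}·δ_{a,k}). Then c satisfies both c(−k) = −c(k) for all k ∈ ℤ and (E) if and only if there exists α ∈ F such that c(k) = α·(−1)^k for all k ≥ 1, c(0) = 0, and c(−k) = −c(k) for all k. (Thus, up to a constant factor, the unique solution is r(λ) = ∑_{n≥1} (−1)ⁿ(λⁿ − λ^{−n}).) -/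

import Mathlib

/-- The Kronecker delta `δ_{a,b}` with values in `F`. -/
def kdelta (F : Type*) [Zero F] [One F] (a b : ℤ) : F := if a = b then 1 else 0

set_option maxHeartbeats 2000000 in
private lemma stmt14_aux (F : Type*) [Field F] [CharZero F] (c : ℤ → F)
    (h0 : c 0 = 0) (hodd : ∀ k : ℤ, c (-k) = -c k)
    (hrec : ∀ k : ℤ, k ≠ 0 → k ≠ -1 → c (k + 1) = -c k)
    (a b k : ℤ) :
        (kdelta F a 1 - kdelta F a (-1)) * kdelta F b k * c k
          - (kdelta F b 1 - kdelta F b (-1)) * kdelta F a k * c k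
          + kdelta F k 0 *
              (c b * (kdelta F a (b + 1) - kdelta F a (b - 1))
                - c a * (kdelta F b (a + 1) - kdelta F b (a - 1)))
        = c (k - 1) * (kdelta F b 1 * kdelta F a k - kdelta F a 1 * kdelta F b k)
          + c (k + 1) * (kdelta F a (-1) * kdelta F b k - kdelta F b (-1) * kdelta F a k) := by
  simp only [kdelta]
  split_ifs <;>
    first
      | (exfalso; omega)
      | ring1
      | (rcases eq_or_ne (k - 1) 0 with e1 | e1 <;>
           first
             | (exfalso; omega)
             | (rcases eq_or_ne (k - 1) (-1) with e2 | e2 <;>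
                  first
                    | (exfalso; omega)
                    | (have h := hrec (k - 1) e1 e2
                       rw [show k - 1 + 1 = k from by ring] at h
                       first | linear_combination h | linear_combination -h)))
      | (rcases eq_or_ne k 0 with e1 | e1 <;>
           first
             | (exfalso; omega)
             | (rcases eq_or_ne k (-1) with e2 | e2 <;>
                  first
                    | (exfalso; omega)
                    | (have h := hrec k e1 e2
                       first | linear_combination h | linear_combination -h)))
      | (rcases eq_or_ne a (b + 1) with e | e <;>
           first
             | (exfalso; omega)
             | (subst e
                rcases eq_or_ne b 0 with e1 | e1 <;>
                  first
                    | (exfalso; omega)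
                    | (rcases eq_or_ne b (-1) with e2 | e2 <;>
                         first
                           | (exfalso; omega)
                           | (have h := hrec b e1 e2
                              first | linear_combination h | linear_combination -h))))
      | (rcases eq_or_ne b (a + 1) with e | e <;>
           first
             | (exfalso; omega)
             | (subst e
                rcases eq_or_ne a 0 with e1 | e1 <;>
                  first
                    | (exfalso; omega)
                    | (rcases eq_or_ne a (-1) with e2 | e2 <;>
                         first
                           | (exfalso; omega)
                           | (have h := hrec a e1 e2
                              first | linear_combination h | linear_combination -h))))
      | (rcases eq_or_ne k 0 with ek | ek <;>
           first
             | (exfalso; omega)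
             | (subst ek
                rcases eq_or_ne b 0 with eb | eb <;>
                  first
                    | (subst eb
                       rcases eq_or_ne a 1 with ea | ea <;>
                         first
                           | (exfalso; omega)
                           | (subst ea; norm_num [h0, hodd 1]; done)
                           | (rcases eq_or_ne a (-1) with ea2 | ea2 <;>
                                first
                                  | (exfalso; omega)
                                  | (subst ea2; norm_num [h0, hodd 1]; done)))
                    | (rcases eq_or_ne a 0 with ea | ea <;>
                         first
                           | (exfalso; omega)
                           | (subst ea
                              rcases eq_or_ne b 1 with eb1 | eb1 <;>
                                first
                                  | (exfalso; omega)
                                  | (subst eb1; norm_num [h0, hodd 1]; done)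
                                  | (rcases eq_or_ne b (-1) with eb2 | eb2 <;>
                                       first
                                         | (exfalso; omega)
                                         | (subst eb2; norm_num [h0, hodd 1]; done))))))

/-- uniqueness of the second compatible multiplicative Poisson structure for
`W₂`.  A function `c : ℤ → F` satisfies both `c(−k) = −c(k)` for all `k` and the
compatibility equation (E) (the coefficient form of
`p(λ)r(μS) − p(μ)r(λS) + (p(λ)−p(μ))r(λμ) = p(λμS)(r(λS) − r(μS))` for
`p(λ) = λ − λ⁻¹`, `r(λ) = ∑_k c(k)λᵏ`) if and only if there is `α ∈ F` with
`c(k) = α·(−1)ᵏ` for all `k ≥ 1`, `c(0) = 0`, and `c(−k) = −c(k)` for all `k`. -/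
theorem stmt_14 (F : Type*) [Field F] [CharZero F] (c : ℤ → F) :
    ((∀ k : ℤ, c (-k) = -c k) ∧
      (∀ a b k : ℤ,
        (kdelta F a 1 - kdelta F a (-1)) * kdelta F b k * c k
          - (kdelta F b 1 - kdelta F b (-1)) * kdelta F a k * c k
          + kdelta F k 0 *
              (c b * (kdelta F a (b + 1) - kdelta F a (b - 1))
                - c a * (kdelta F b (a + 1) - kdelta F b (a - 1)))
        = c (k - 1) * (kdelta F b 1 * kdelta F a k - kdelta F a 1 * kdelta F b k)
          + c (k + 1) * (kdelta F a (-1) * kdelta F b k - kdelta F b (-1) * kdelta F a k)))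
    ↔ ∃ α : F,
        (∀ k : ℤ, 1 ≤ k → c k = α * (-1) ^ k)
        ∧ c 0 = 0
        ∧ (∀ k : ℤ, c (-k) = -c k) := by
  constructor
  · rintro ⟨hodd, hE⟩
    have hc0 : c 0 = 0 := by
      have h := hE 1 0 0
      have ho := hodd 1
      norm_num [kdelta] at h ho
      linear_combination h/2 - ho/2
    have hstep : ∀ n : ℤ, 1 ≤ n → c (n + 1) = -c n := by
      intro n hn
      have h := hE (-1) n n
      norm_num [kdelta, show n ≠ -1 by omega, show (-1:ℤ) ≠ n by omega,
        show n ≠ 0 by omega, show (-1:ℤ) ≠ n + 1 by omega,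
        show (-1:ℤ) ≠ n - 1 by omega, show n ≠ -2 by omega] at h
      linear_combination -h
    refine ⟨-c 1, ?_, hc0, hodd⟩
    intro k hk
    refine Int.le_induction (motive := fun n _ => c n = -c 1 * (-1) ^ n) ?_ ?_ k hk
    · show c 1 = -c 1 * (-1) ^ (1 : ℤ)
      rw [zpow_one]; ring
    · intro n hn ih
      show c (n + 1) = -c 1 * (-1) ^ (n + 1)
      rw [hstep n hn, ih, zpow_add_one₀ (by norm_num : (-1 : F) ≠ 0)]
      ring
  · rintro ⟨α, hpos, h0, hodd⟩
    refine ⟨hodd, ?_⟩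
    have hstep : ∀ n : ℤ, 1 ≤ n → c (n + 1) = -c n := by
      intro n hn
      have h1 := hpos n hn
      have h2 := hpos (n + 1) (by omega)
      rw [h1, h2, zpow_add_one₀ (by norm_num : (-1 : F) ≠ 0)]
      ring
    have hrec : ∀ m : ℤ, m ≠ 0 → m ≠ -1 → c (m + 1) = -c m := by
      intro m hm0 hm1
      rcases le_or_gt 1 m with hm | hm
      · exact hstep m hm
      · have hn : 1 ≤ -m - 1 := by omega
        have e1 : c (m + 1) = -c (-m - 1) := by
          have h := hodd (-m - 1)
          rw [show -(-m - 1) = m + 1 from by ring] at h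
          exact h
        have e2 : c m = -c (-m) := by
          have h := hodd (-m)
          rw [neg_neg] at h
          exact h
        have e3 := hstep (-m - 1) hn
        rw [show -m - 1 + 1 = -m from by ring] at e3
        rw [e1, e2, e3]
        ring
    exact stmt14_aux F c h0 hodd hrec
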